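/- arXiv:1710.07920 — 5 statements merged into one kernel-verified Lean document; each statement's English description precedes it below -/
import Mathlib

section
/- Let n be a positive integer and let 2^κ be the largest power of 2 dividing n. Define α_{j,n} = C(n+j−1, j) mod 2. Then the minimum j ≥ 1 with α_{j,n} = 1 is exactly 2^κ; that is, C(n+j−1,j) is even for all 1 ≤ j < 2^κ, and C(n+2^κ−1, 2^κ) is odd. -/
private lemma lucas_step (a b : ℕ) :
    (a + b).choose b % 2 = (((a + b) % 2).choose (b % 2) * ((a + b) / 2).choose (b / 2)) % 2 :=
  haveI : Fact (Nat.Prime 2) := ⟨Nat.prime_two⟩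
  Choose.choose_modEq_choose_mod_mul_choose_div_nat

/-- If `a` and `b` share a set bit, then `C(a+b, b)` is even. -/
private lemma even_choose_of_common_bit :
    ∀ i a b : ℕ, a / 2 ^ i % 2 = 1 → b / 2 ^ i % 2 = 1 → (a + b).choose b % 2 = 0 := by
  intro i
  induction i with
  | zero =>
    intro a b ha hb
    rw [lucas_step a b]
    simp only [pow_zero, Nat.div_one] at ha hb
    have h1 : (a + b) % 2 = 0 := by omega
    rw [h1, hb]
    simp
  | succ k ih =>
    intro a b ha hb
    rcases Nat.even_or_odd a with hae | hao
    · rcases Nat.even_or_odd b with hbe | hbo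
      · -- both even or mixed: no carry at bit 0
        rw [lucas_step a b]
        rw [Nat.even_iff] at hae hbe
        have h1 : (a + b) % 2 = 0 := by omega
        have h2 : b % 2 = 0 := hbe
        have h3 : (a + b) / 2 = a / 2 + b / 2 := by omega
        rw [h1, h2, h3]
        have := ih (a / 2) (b / 2)
          (by rw [Nat.div_div_eq_div_mul, ← pow_succ']; exact ha)
          (by rw [Nat.div_div_eq_div_mul, ← pow_succ']; exact hb)
        simp [Nat.mul_mod, this]
      · rw [Nat.even_iff] at hae; rw [Nat.odd_iff] at hbo
        rw [lucas_step a b]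
        have h1 : (a + b) % 2 = 1 := by omega
        have h3 : (a + b) / 2 = a / 2 + b / 2 := by omega
        rw [h1, hbo, h3]
        have := ih (a / 2) (b / 2)
          (by rw [Nat.div_div_eq_div_mul, ← pow_succ']; exact ha)
          (by rw [Nat.div_div_eq_div_mul, ← pow_succ']; exact hb)
        simp [Nat.mul_mod, this]
    · rcases Nat.even_or_odd b with hbe | hbo
      · rw [Nat.odd_iff] at hao; rw [Nat.even_iff] at hbe
        rw [lucas_step a b]
        have h1 : (a + b) % 2 = 1 := by omega
        have h3 : (a + b) / 2 = a / 2 + b / 2 := by omega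
        rw [h1, hbe, h3]
        have := ih (a / 2) (b / 2)
          (by rw [Nat.div_div_eq_div_mul, ← pow_succ']; exact ha)
          (by rw [Nat.div_div_eq_div_mul, ← pow_succ']; exact hb)
        simp [Nat.mul_mod, this]
      · -- both odd: even right away (common bit 0)
        rw [Nat.odd_iff] at hao hbo
        rw [lucas_step a b]
        have h1 : (a + b) % 2 = 0 := by omega
        rw [h1, hbo]
        simp

/-- If bit `k` of `a` is clear, then `C(a + 2^k, 2^k)` is odd. -/
private lemma odd_choose_add_pow :
    ∀ k a : ℕ, a / 2 ^ k % 2 = 0 → (a + 2 ^ k).choose (2 ^ k) % 2 = 1 := by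
  intro k
  induction k with
  | zero =>
    intro a ha
    simp only [pow_zero, Nat.div_one] at ha ⊢
    rw [Nat.choose_one_right]
    omega
  | succ k ih =>
    intro a ha
    rw [lucas_step a (2 ^ (k + 1))]
    have h2 : 2 ^ (k + 1) % 2 = 0 := by
      simp [pow_succ, Nat.mul_mod]
    have h1 : (a + 2 ^ (k + 1)) % 2 = a % 2 := by omega
    have h3 : (a + 2 ^ (k + 1)) / 2 = a / 2 + 2 ^ k := by
      have : 2 ^ (k + 1) = 2 * 2 ^ k := by ring
      omega
    have h4 : 2 ^ (k + 1) / 2 = 2 ^ k := by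
      rw [pow_succ]; omega
    rw [h1, h2, h3, h4, Nat.choose_zero_right, one_mul]
    exact ih (a / 2) (by rw [Nat.div_div_eq_div_mul, ← pow_succ']; exact ha)

theorem stmt_4 (n : ℕ) (hn : 0 < n) (κ : ℕ) (hκ : κ = padicValNat 2 n) :
    (∀ j, 1 ≤ j → j < 2 ^ κ → Even ((n + j - 1).choose j))
      ∧ Odd ((n + 2 ^ κ - 1).choose (2 ^ κ)) := by
  have hdvd : 2 ^ κ ∣ n := hκ ▸ pow_padicValNat_dvd
  have hndvd : ¬ 2 ^ (κ + 1) ∣ n := hκ ▸ pow_succ_padicValNat_not_dvd hn.ne'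
  obtain ⟨s, hs⟩ := hdvd
  have hs1 : 1 ≤ s := by
    rcases Nat.eq_zero_or_pos s with h | h
    · rw [h, mul_zero] at hs; omega
    · exact h
  have hsodd : s % 2 = 1 := by
    rcases Nat.even_or_odd s with he | ho
    · exfalso
      obtain ⟨t, ht⟩ := he
      exact hndvd ⟨t, by rw [hs, ht]; ring⟩
    · exact Nat.odd_iff.mp ho
  constructor
  · intro j hj1 hj2
    set i := padicValNat 2 j with hi
    have hji : 2 ^ i ∣ j := pow_padicValNat_dvd
    have hjndvd : ¬ 2 ^ (i + 1) ∣ j := pow_succ_padicValNat_not_dvd (by omega)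
    obtain ⟨u, hu⟩ := hji
    have hu1 : 1 ≤ u := by
      rcases Nat.eq_zero_or_pos u with h | h
      · rw [h, mul_zero] at hu; omega
      · exact h
    have huodd : u % 2 = 1 := by
      rcases Nat.even_or_odd u with he | ho
      · exfalso
        obtain ⟨t, ht⟩ := he
        exact hjndvd ⟨t, by rw [hu, ht]; ring⟩
      · exact Nat.odd_iff.mp ho
    have hik : i < κ := by
      by_contra h
      push_neg at h
      have : 2 ^ κ ≤ 2 ^ i := Nat.pow_le_pow_right (by norm_num) h
      have : 2 ^ i ≤ j := by
        calc 2 ^ i = 2 ^ i * 1 := by ring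
        _ ≤ 2 ^ i * u := by exact Nat.mul_le_mul_left _ hu1
        _ = j := hu.symm
      omega
    -- bit i of j is set
    have hjbit : j / 2 ^ i % 2 = 1 := by
      rw [hu, Nat.mul_div_cancel_left _ (pow_pos (by norm_num : (0:ℕ) < 2) i)]
      exact huodd
    -- bit i of n - 1 is set
    have hnbit : (n - 1) / 2 ^ i % 2 = 1 := by
      have hκi : κ - i ≥ 1 := by omega
      have hn2 : n = 2 ^ i * (2 ^ (κ - i) * s) := by
        rw [hs, ← mul_assoc, ← pow_add]
        congr 2
        omega
      have hv1 : 1 ≤ 2 ^ (κ - i) * s :=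
        Nat.mul_pos (pow_pos (by norm_num : (0:ℕ) < 2) _) (by omega)
      have : n - 1 = 2 ^ i * (2 ^ (κ - i) * s - 1) + (2 ^ i - 1) := by
        have h2i : 1 ≤ 2 ^ i := Nat.one_le_two_pow
        rw [hn2]
        have h5 := Nat.mul_sub_one (2 ^ i) (2 ^ (κ - i) * s)
        have h6 : 2 ^ i * 1 ≤ 2 ^ i * (2 ^ (κ - i) * s) :=
          Nat.mul_le_mul_left _ hv1
        omega
      rw [this, Nat.mul_add_div (pow_pos (by norm_num : (0:ℕ) < 2) i)]
      rw [Nat.div_eq_of_lt (by omega), Nat.add_zero]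
      -- 2^(κ-i) * s is even since κ - i ≥ 1
      have heven : (2 ^ (κ - i) * s) % 2 = 0 := by
        obtain ⟨w, hw⟩ : ∃ w, κ - i = w + 1 := ⟨κ - i - 1, by omega⟩
        rw [hw, pow_succ']
        simp [Nat.mul_mod]
      omega
    have key := even_choose_of_common_bit i (n - 1) j hnbit hjbit
    have harg : n + j - 1 = (n - 1) + j := by omega
    rw [harg, Nat.even_iff]
    exact key
  · -- bit κ of n - 1 is clear
    have hnbit : (n - 1) / 2 ^ κ % 2 = 0 := by
      have : n - 1 = 2 ^ κ * (s - 1) + (2 ^ κ - 1) := by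
        have h2κ : 1 ≤ 2 ^ κ := Nat.one_le_two_pow
        rw [hs]
        have h5 := Nat.mul_sub_one (2 ^ κ) s
        have h6 : 2 ^ κ * 1 ≤ 2 ^ κ * s := Nat.mul_le_mul_left _ hs1
        omega
      rw [this, Nat.mul_add_div (pow_pos (by norm_num : (0:ℕ) < 2) κ)]
      rw [Nat.div_eq_of_lt (by omega), Nat.add_zero]
      omega
    have key := odd_choose_add_pow κ (n - 1) hnbit
    have harg : n + 2 ^ κ - 1 = (n - 1) + 2 ^ κ := by omega
    rw [harg, Nat.odd_iff]
    exact key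
end

section
/- For any integers κ ≥ 0 and j with 1 ≤ j ≤ 2^κ − 1, if n is a positive integer divisible by 2^κ, then the binomial coefficient C(n+j−1, j) is even. -/
theorem stmt_5 (κ j n : ℕ) (hj1 : 1 ≤ j) (hj2 : j ≤ 2 ^ κ - 1)
    (hn : 0 < n) (hdvd : 2 ^ κ ∣ n) :
    Even ((n + j - 1).choose j) := by
  obtain ⟨m, rfl⟩ := hdvd
  set P := 2 ^ κ with hP
  have hP1 : 1 < P := by
    have : 1 ≤ P - 1 := hj1.trans hj2
    have hP0 : 0 < P := Nat.pow_pos (by norm_num)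
    omega
  have hκ1 : 1 ≤ κ := by
    by_contra h
    interval_cases κ <;> simp_all
  have hm : 1 ≤ m := by
    rcases Nat.eq_zero_or_pos m with h | h
    · simp [h] at hn
    · exact h
  have hPm : P ≤ P * m := Nat.le_mul_of_pos_right P hm
  have hjP : j < P := by omega
  -- rewrite n + j - 1 = (P*m - 1) + j
  have hrw : P * m + j - 1 = (P * m - 1) + j := by omega
  rw [hrw]
  -- carry at position κ
  have hmod : (P * m - 1) % P = P - 1 := by
    have h1 : P * (m - 1) = P * m - P := by rw [Nat.mul_sub, mul_one]
    have h2 : P * m - 1 = P * (m - 1) + (P - 1) := by omega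
    rw [h2, Nat.mul_add_mod, Nat.mod_eq_of_lt (by omega)]
  have hjmod : j % P = j := Nat.mod_eq_of_lt hjP
  set N := (P * m - 1) + j with hN
  have hN0 : 0 < N := by omega
  have hlog : κ ≤ Nat.log 2 N := by
    rw [Nat.le_log_iff_pow_le (by norm_num) (by omega)]
    omega
  have hmem : κ ∈ Finset.filter (fun i => 2 ^ i ≤ j % 2 ^ i + (P * m - 1) % 2 ^ i)
      (Finset.Ico 1 (Nat.log 2 N + 1)) := by
    simp only [Finset.mem_filter, Finset.mem_Ico]
    refine ⟨⟨hκ1, by omega⟩, ?_⟩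
    rw [← hP, hmod, hjmod]
    omega
  have hmul := Nat.Prime.emultiplicity_choose' (p := 2) (n := P * m - 1) (k := j)
    (b := Nat.log 2 N + 1) Nat.prime_two (by rw [← hN]; omega)
  have hcard : 1 ≤ (Finset.filter (fun i => 2 ^ i ≤ j % 2 ^ i + (P * m - 1) % 2 ^ i)
      (Finset.Ico 1 (Nat.log 2 N + 1))).card :=
    Finset.card_pos.mpr ⟨κ, hmem⟩
  have hdvd2 : 2 ∣ N.choose j := by
    have : (1 : ℕ∞) ≤ emultiplicity 2 (N.choose j) := by
      rw [hmul]
      exact_mod_cast hcard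
    simpa using pow_dvd_of_le_emultiplicity (k := 1) this
  exact even_iff_two_dvd.mpr hdvd2
end

section
/- Let ξ_1,…,ξ_n be i.i.d. random variables with values in {−1,1} and P(ξ_i=1)=p. For any nonnegative integer k ≤ n, the product Π_{j=0}^{k} ξ_{n−j}^{β_{k,j}}, where β_{k,j}=C(k,j) mod 2, has expectation (2p−1)^{2^θ(k)}, where θ(k) is the number of ones in the binary representation of k. -/
open MeasureTheory ProbabilityTheory

/-- θ(k): number of ones in the binary representation of k. -/
def binOnes (k : ℕ) : ℕ := (Nat.digits 2 k).count 1

lemma binOnes_zero : binOnes 0 = 0 := by simp [binOnes]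

lemma binOnes_two_mul {m : ℕ} (hm : m ≠ 0) : binOnes (2 * m) = binOnes m := by
  unfold binOnes
  rw [Nat.digits_def' (by norm_num : 1 < 2) (by positivity)]
  simp [Nat.mul_div_cancel_left, Nat.mul_mod_right]

lemma binOnes_two_mul_add_one (m : ℕ) : binOnes (2 * m + 1) = binOnes m + 1 := by
  unfold binOnes
  rw [Nat.digits_def' (by norm_num : 1 < 2) (by positivity)]
  have h1 : (2 * m + 1) % 2 = 1 := by omega
  have h2 : (2 * m + 1) / 2 = m := by omega
  simp [h1, h2]

lemma sum_range_two_mul (g : ℕ → ℕ) (m : ℕ) :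
    ∑ j ∈ Finset.range (2 * m), g j = ∑ i ∈ Finset.range m, (g (2 * i) + g (2 * i + 1)) := by
  induction m with
  | zero => simp
  | succ m ih =>
      have : 2 * (m + 1) = (2 * m) + 1 + 1 := by ring
      rw [this, Finset.sum_range_succ, Finset.sum_range_succ, ih, Finset.sum_range_succ]
      ring

lemma lucas_two (n j : ℕ) :
    n.choose j % 2 = ((n % 2).choose (j % 2) * (n / 2).choose (j / 2)) % 2 := by
  haveI : Fact (Nat.Prime 2) := ⟨Nat.prime_two⟩
  exact Choose.choose_modEq_choose_mod_mul_choose_div_nat (p := 2)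

lemma sum_choose_mod_two : ∀ k : ℕ,
    ∑ j ∈ Finset.range (k + 1), k.choose j % 2 = 2 ^ binOnes k := by
  intro k
  induction k using Nat.strong_induction_on with
  | _ k ih =>
    match k with
    | 0 => simp [binOnes_zero]
    | (k + 1) =>
      rcases Nat.even_or_odd (k + 1) with ⟨m, hm⟩ | ⟨m, hm⟩
      · -- k + 1 = 2 * m, m ≥ 1
        have hm' : k + 1 = 2 * m := by omega
        have hmpos : m ≠ 0 := by omega
        have hrec := ih m (by omega)
        rw [hm']
        have hsplit : (2 * m : ℕ) + 1 = 2 * m + 1 := rfl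
        rw [Finset.sum_range_succ, sum_range_two_mul]
        have heven : ∀ i, (2 * m).choose (2 * i) % 2 = m.choose i % 2 := by
          intro i
          rw [lucas_two]
          have : (2 * m) % 2 = 0 := by omega
          simp [this, Nat.mul_mod_right, Nat.mul_div_cancel_left]
        have hodd : ∀ i, (2 * m).choose (2 * i + 1) % 2 = 0 := by
          intro i
          rw [lucas_two]
          have h1 : (2 * m) % 2 = 0 := by omega
          have h2 : (2 * i + 1) % 2 = 1 := by omega
          simp [h1, h2]
        calc (∑ i ∈ Finset.range m,
                ((2 * m).choose (2 * i) % 2 + (2 * m).choose (2 * i + 1) % 2))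
              + (2 * m).choose (2 * m) % 2
            = (∑ i ∈ Finset.range m, m.choose i % 2) + m.choose m % 2 := by
              congr 1
              · exact Finset.sum_congr rfl fun i _ => by rw [heven, hodd, Nat.add_zero]
              · rw [show 2 * m = 2 * m + 0 from rfl]
                have := heven m
                simpa using this
          _ = ∑ i ∈ Finset.range (m + 1), m.choose i % 2 := (Finset.sum_range_succ _ m).symm
          _ = 2 ^ binOnes m := hrec
          _ = 2 ^ binOnes (2 * m) := by rw [binOnes_two_mul hmpos]
      · -- k + 1 = 2 * m + 1
        have hm' : k + 1 = 2 * m + 1 := by omega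
        have hrec := ih m (by omega)
        rw [hm']
        have : (2 * m + 1) + 1 = 2 * (m + 1) := by ring
        rw [this, sum_range_two_mul]
        have heven : ∀ i, (2 * m + 1).choose (2 * i) % 2 = m.choose i % 2 := by
          intro i
          rw [lucas_two]
          have h1 : (2 * m + 1) % 2 = 1 := by omega
          have h2 : (2 * m + 1) / 2 = m := by omega
          simp [h1, h2, Nat.mul_mod_right, Nat.mul_div_cancel_left]
        have hodd : ∀ i, (2 * m + 1).choose (2 * i + 1) % 2 = m.choose i % 2 := by
          intro i
          rw [lucas_two]
          have h1 : (2 * m + 1) % 2 = 1 := by omega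
          have h2 : (2 * m + 1) / 2 = m := by omega
          have h3 : (2 * i + 1) % 2 = 1 := by omega
          have h4 : (2 * i + 1) / 2 = i := by omega
          simp [h1, h2, h3, h4]
        calc ∑ i ∈ Finset.range (m + 1),
                ((2 * m + 1).choose (2 * i) % 2 + (2 * m + 1).choose (2 * i + 1) % 2)
            = ∑ i ∈ Finset.range (m + 1), 2 * (m.choose i % 2) := by
              refine Finset.sum_congr rfl fun i _ => ?_
              rw [heven, hodd]; ring
          _ = 2 * ∑ i ∈ Finset.range (m + 1), m.choose i % 2 := by
              rw [Finset.mul_sum]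
          _ = 2 * 2 ^ binOnes m := by rw [hrec]
          _ = 2 ^ binOnes (2 * m + 1) := by
              rw [binOnes_two_mul_add_one, pow_succ]; ring

theorem stmt_8 {Ω : Type*} [MeasureSpace Ω] [IsProbabilityMeasure (ℙ : Measure Ω)]
    (p : ℝ) (hp : p ∈ Set.Ioo (0 : ℝ) 1)
    (ξ : ℕ → Ω → ℝ) (hmeas : ∀ i, Measurable (ξ i))
    (hindep : iIndepFun ξ ℙ)
    (hval : ∀ i ω, ξ i ω = 1 ∨ ξ i ω = -1)
    (hmean : ∀ i, ∫ ω, ξ i ω ∂ℙ = 2 * p - 1)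
    (k n : ℕ) (hk : k ≤ n) :
    ∫ ω, ∏ j ∈ Finset.range (k + 1), (ξ (n - j) ω) ^ (k.choose j % 2) ∂ℙ
      = (2 * p - 1) ^ (2 ^ binOnes k) := by
  -- integrability of ξ i
  have hint : ∀ i, Integrable (ξ i) ℙ := by
    intro i
    refine Integrable.mono' (integrable_const 1) (hmeas i).aestronglyMeasurable ?_
    filter_upwards with ω
    rcases hval i ω with h | h <;> rw [h] <;> norm_num
  -- integral of product over any finset
  have key : ∀ T : Finset ℕ, (∫ ω, ∏ i ∈ T, ξ i ω ∂ℙ) = (2 * p - 1) ^ T.card := by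
    intro T
    induction T using Finset.induction_on with
    | empty => simp
    | @insert a s ha ih =>
        have hprodint : Integrable (∏ i ∈ s, ξ i) ℙ := by
          have hfn : (∏ i ∈ s, ξ i) = fun ω => ∏ i ∈ s, ξ i ω := by
            funext ω; exact Finset.prod_apply ω s ξ
          rw [hfn]
          refine Integrable.mono' (integrable_const 1)
            (Finset.measurable_prod s fun i _ => hmeas i).aestronglyMeasurable ?_
          filter_upwards with ω
          rw [Real.norm_eq_abs, Finset.abs_prod]
          refine le_of_eq (Finset.prod_eq_one fun i _ => ?_)
          rcases hval i ω with h | h <;> rw [h] <;> norm_num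
        have hIF : IndepFun (∏ j ∈ s, ξ j) (ξ a) ℙ :=
          hindep.indepFun_finset_prod_of_notMem hmeas ha
        have := hIF.integral_mul_eq_mul_integral hprodint.1 (hint a).1
        rw [Finset.card_insert_of_notMem ha]
        calc ∫ ω, ∏ i ∈ insert a s, ξ i ω ∂ℙ
            = ∫ ω, (∏ i ∈ s, ξ i) ω * ξ a ω ∂ℙ := by
              refine integral_congr_ae (Filter.Eventually.of_forall fun ω => ?_)
              dsimp only
              rw [Finset.prod_insert ha, Finset.prod_apply]; ring
          _ = (∫ ω, (∏ i ∈ s, ξ i) ω ∂ℙ) * ∫ ω, ξ a ω ∂ℙ := this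
          _ = (2 * p - 1) ^ s.card * (2 * p - 1) := by
              rw [hmean a]
              congr 1
              rw [← ih]
              refine integral_congr_ae (Filter.Eventually.of_forall fun ω => ?_)
              rw [Finset.prod_apply]
          _ = (2 * p - 1) ^ (s.card + 1) := by ring
  -- rewrite the integrand as a product over a finset of indices
  set S : Finset ℕ := (Finset.range (k + 1)).filter (fun j => k.choose j % 2 = 1) with hS
  have hstep1 : ∀ ω, ∏ j ∈ Finset.range (k + 1), (ξ (n - j) ω) ^ (k.choose j % 2)
      = ∏ j ∈ S, ξ (n - j) ω := by
    intro ω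
    rw [hS, Finset.prod_filter]
    refine Finset.prod_congr rfl fun j _ => ?_
    rcases Nat.mod_two_eq_zero_or_one (k.choose j) with h | h <;> simp [h]
  have hinj : Set.InjOn (fun j => n - j) (Finset.range (k + 1) : Set ℕ) := by
    intro a ha b hb hab
    simp only [Finset.coe_range, Set.mem_Iio] at ha hb
    have hab' : n - a = n - b := hab
    omega
  have hinjS : Set.InjOn (fun j => n - j) (S : Set ℕ) := by
    refine hinj.mono ?_
    intro x hx
    simp only [hS, Finset.coe_filter, Set.mem_setOf_eq] at hx
    exact Finset.mem_coe.mpr hx.1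
  have hstep2 : ∀ ω, ∏ j ∈ S, ξ (n - j) ω = ∏ i ∈ S.image (fun j => n - j), ξ i ω := by
    intro ω
    rw [Finset.prod_image (fun a ha b hb => hinjS ha hb)]
  have hcardim : (S.image (fun j => n - j)).card = S.card := Finset.card_image_of_injOn hinjS
  have hcardS : S.card = 2 ^ binOnes k := by
    have := sum_choose_mod_two k
    rw [hS, Finset.card_filter]
    rw [← this]
    refine Finset.sum_congr rfl fun j _ => ?_
    rcases Nat.mod_two_eq_zero_or_one (k.choose j) with h | h <;> simp [h]
  calc ∫ ω, ∏ j ∈ Finset.range (k + 1), (ξ (n - j) ω) ^ (k.choose j % 2) ∂ℙ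
      = ∫ ω, ∏ i ∈ S.image (fun j => n - j), ξ i ω ∂ℙ := by
        refine integral_congr_ae (Filter.Eventually.of_forall fun ω => ?_)
        dsimp only
        rw [hstep1, hstep2]
    _ = (2 * p - 1) ^ (S.image (fun j => n - j)).card := key _
    _ = (2 * p - 1) ^ (2 ^ binOnes k) := by rw [hcardim, hcardS]
end

section
/- Let ξ_1,…,ξ_N be i.i.d. {−1,1}-valued random variables with mean 2p−1, and for 0 ≤ k ≤ ℓ define Ξ(−k) = Π_{j=0}^{k} ξ_{N−j}^{β_{k,j}} (with N ≥ ℓ). Then E[Ξ(−k)Ξ(−ℓ)] = (2p−1)^{B(k,ℓ)} where B(k,ℓ) = #{ j ∈ [1, max(k,ℓ)] : β_{k,j} + β_{ℓ,j} = 1 }. -/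
open MeasureTheory ProbabilityTheory

private lemma aux_integrable {Ω : Type*} [MeasureSpace Ω] [IsProbabilityMeasure (ℙ : Measure Ω)]
    (ξ : ℕ → Ω → ℝ) (hmeas : ∀ i, Measurable (ξ i))
    (hval : ∀ i ω, ξ i ω = 1 ∨ ξ i ω = -1) (s : Finset ℕ) :
    Integrable (fun ω => ∏ i ∈ s, ξ i ω) ℙ := by
  refine Integrable.mono' (integrable_const (1 : ℝ))
    ((Finset.measurable_prod s fun i _ => hmeas i).aestronglyMeasurable) ?_
  filter_upwards with ω
  have h : |∏ i ∈ s, ξ i ω| = 1 := by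
    rw [Finset.abs_prod]
    refine Finset.prod_eq_one fun i _ => ?_
    rcases hval i ω with h | h <;> simp [h]
  rw [Real.norm_eq_abs, h]

private lemma aux_prod_integral {Ω : Type*} [MeasureSpace Ω] [IsProbabilityMeasure (ℙ : Measure Ω)]
    (ξ : ℕ → Ω → ℝ) (hmeas : ∀ i, Measurable (ξ i))
    (hindep : iIndepFun ξ ℙ)
    (hval : ∀ i ω, ξ i ω = 1 ∨ ξ i ω = -1)
    (c : ℝ) (hmean : ∀ i, ∫ ω, ξ i ω ∂ℙ = c) (s : Finset ℕ) :
    ∫ ω, ∏ i ∈ s, ξ i ω ∂ℙ = c ^ s.card := by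
  induction s using Finset.induction_on with
  | empty => simp
  | @insert a s ha ih =>
    have hind : IndepFun (ξ a) (fun ω => ∏ i ∈ s, ξ i ω) ℙ := by
      have := (hindep.indepFun_finsetProd_of_notMem hmeas ha).symm
      simpa [Finset.prod_fn] using this
    have hint := hind.integral_mul_eq_mul_integral
      (hmeas a).aestronglyMeasurable (aux_integrable ξ hmeas hval s).aestronglyMeasurable
    rw [Finset.card_insert_of_notMem ha]
    calc ∫ ω, ∏ i ∈ insert a s, ξ i ω ∂ℙ
        = ∫ ω, ξ a ω * ∏ i ∈ s, ξ i ω ∂ℙ := by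
          congr 1; ext ω; exact Finset.prod_insert ha
      _ = (∫ ω, ξ a ω ∂ℙ) * ∫ ω, ∏ i ∈ s, ξ i ω ∂ℙ := hint
      _ = c ^ (s.card + 1) := by rw [hmean a, ih]; ring

theorem stmt_9 {Ω : Type*} [MeasureSpace Ω] [IsProbabilityMeasure (ℙ : Measure Ω)]
    (p : ℝ) (hp : p ∈ Set.Ioo (0 : ℝ) 1)
    (ξ : ℕ → Ω → ℝ) (hmeas : ∀ i, Measurable (ξ i))
    (hindep : iIndepFun ξ ℙ)
    (hval : ∀ i ω, ξ i ω = 1 ∨ ξ i ω = -1)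
    (hmean : ∀ i, ∫ ω, ξ i ω ∂ℙ = 2 * p - 1)
    (k ℓ N : ℕ) (hkℓ : k ≤ ℓ) (hℓN : ℓ ≤ N) :
    ∫ ω, (∏ j ∈ Finset.range (k + 1), (ξ (N - j) ω) ^ (k.choose j % 2)) *
          (∏ j ∈ Finset.range (ℓ + 1), (ξ (N - j) ω) ^ (ℓ.choose j % 2)) ∂ℙ
      = (2 * p - 1) ^
          ((Finset.Icc 1 (max k ℓ)).filter
            (fun j => k.choose j % 2 + ℓ.choose j % 2 = 1)).card := by
  set S : Finset ℕ := (Finset.range (ℓ + 1)).filter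
    (fun j => k.choose j % 2 + ℓ.choose j % 2 = 1) with hS
  set T : Finset ℕ := S.image (fun j => N - j) with hT
  have hinj : Set.InjOn (fun j => N - j) ↑S := by
    intro x hx y hy hxy
    simp only [hS, Finset.mem_coe, Finset.mem_filter, Finset.mem_range] at hx hy
    change N - x = N - y at hxy
    omega
  -- pointwise rewrite
  have hpt : ∀ ω, (∏ j ∈ Finset.range (k + 1), (ξ (N - j) ω) ^ (k.choose j % 2)) *
      (∏ j ∈ Finset.range (ℓ + 1), (ξ (N - j) ω) ^ (ℓ.choose j % 2))
      = ∏ i ∈ T, ξ i ω := by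
    intro ω
    have h1 : (∏ j ∈ Finset.range (k + 1), (ξ (N - j) ω) ^ (k.choose j % 2))
        = ∏ j ∈ Finset.range (ℓ + 1), (ξ (N - j) ω) ^ (k.choose j % 2) := by
      refine Finset.prod_subset (Finset.range_subset_range.mpr (Nat.succ_le_succ hkℓ)) ?_
      intro x hx hx'
      simp only [Finset.mem_range, not_lt] at hx hx'
      rw [Nat.choose_eq_zero_of_lt (by omega)]
      simp
    rw [h1, ← Finset.prod_mul_distrib]
    simp_rw [← pow_add]
    have h3 : ∏ j ∈ Finset.range (ℓ + 1), (ξ (N - j) ω) ^ (k.choose j % 2 + ℓ.choose j % 2)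
        = ∏ j ∈ S, (ξ (N - j) ω) ^ (k.choose j % 2 + ℓ.choose j % 2) := by
      refine (Finset.prod_subset (Finset.filter_subset _ _) ?_).symm
      intro x hx hx'
      rw [Finset.mem_filter] at hx'
      push_neg at hx'
      have hne := hx' hx
      have h2k : k.choose x % 2 ≤ 1 := Nat.le_of_lt_succ (Nat.mod_lt _ (by norm_num))
      have h2l : ℓ.choose x % 2 ≤ 1 := Nat.le_of_lt_succ (Nat.mod_lt _ (by norm_num))
      have : k.choose x % 2 + ℓ.choose x % 2 = 0 ∨ k.choose x % 2 + ℓ.choose x % 2 = 2 := by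
        omega
      rcases this with h | h <;> rw [h]
      · simp
      · rcases hval (N - x) ω with hv | hv <;> simp [hv]
    rw [h3]
    have h4 : ∏ j ∈ S, (ξ (N - j) ω) ^ (k.choose j % 2 + ℓ.choose j % 2)
        = ∏ j ∈ S, ξ (N - j) ω := by
      refine Finset.prod_congr rfl fun j hj => ?_
      rw [Finset.mem_filter] at hj
      rw [hj.2, pow_one]
    rw [h4, hT]
    rw [Finset.prod_image (fun x hx y hy hxy => hinj hx hy hxy)]
  have hinjcard : T.card = S.card := by
    rw [hT]
    exact Finset.card_image_of_injOn hinj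
  have hScard : S.card = ((Finset.Icc 1 (max k ℓ)).filter
      (fun j => k.choose j % 2 + ℓ.choose j % 2 = 1)).card := by
    congr 1
    rw [hS]
    ext j
    simp only [Finset.mem_filter, Finset.mem_range, Finset.mem_Icc, max_eq_right hkℓ]
    constructor
    · rintro ⟨hj, hPj⟩
      refine ⟨⟨?_, by omega⟩, hPj⟩
      by_contra h
      have hj0 : j = 0 := by omega
      simp [hj0] at hPj
    · rintro ⟨⟨h1, h2⟩, hPj⟩
      exact ⟨by omega, hPj⟩
  calc ∫ ω, (∏ j ∈ Finset.range (k + 1), (ξ (N - j) ω) ^ (k.choose j % 2)) *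
          (∏ j ∈ Finset.range (ℓ + 1), (ξ (N - j) ω) ^ (ℓ.choose j % 2)) ∂ℙ
      = ∫ ω, ∏ i ∈ T, ξ i ω ∂ℙ := by congr 1; ext ω; exact hpt ω
    _ = (2 * p - 1) ^ T.card := aux_prod_integral ξ hmeas hindep hval _ hmean T
    _ = _ := by rw [hinjcard, hScard]
end

section
/- Let E = {−1,1}^{2K+1} with coordinates indexed by −K,…,K. For e ∈ E and sign s ∈ {−1,1}, define e^s by e^s(0)=s, e^s(k)=e^s(k−1)e(k) and e^s(−k)=e^s(−k+1)e(−k+1) for 1 ≤ k ≤ K. Then the measure π on E defined by π(e) = 2^{−K} Π_{k=0}^{K} ρ(Π_{ℓ=0}^{k} e(−ℓ)^{β_{k,ℓ}}), where ρ(x)=p^{(1+x)/2}(1−p)^{(1−x)/2} and β_{k,ℓ}=C(k,ℓ) mod 2, is a stationary distribution for the Markov kernel P(e, e^s)=ρ(s). -/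
/-- ρ on `{-1,1}` (as `ℤˣ`): `ρ(1) = p`, `ρ(-1) = 1 - p`. -/
def rhoU (p : ℝ) (x : ℤˣ) : ℝ := if x = 1 then p else 1 - p

/-- The one-step move of the bootstrap chain on `E = {-1,1}^{2K+1}`, coordinates indexed by
`Fin (2K+1)` where index `i` represents `i - K ∈ [-K, K]`.  Given innovation sign `s`,
`e^s(0) = s`, `e^s(k) = e^s(k-1) e(k)` and `e^s(-k) = e^s(-k+1) e(-k+1)` for `1 ≤ k ≤ K`;
equivalently `e^s(k) = s ∏_{j=1}^{k} e(j)` and `e^s(-k) = s ∏_{j=0}^{k-1} e(-j)`. -/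
def stepE (K : ℕ) (e : Fin (2 * K + 1) → ℤˣ) (s : ℤˣ) : Fin (2 * K + 1) → ℤˣ :=
  fun i =>
    if K ≤ (i : ℕ) then
      s * ∏ j ∈ Finset.Ioc (⟨K, by omega⟩ : Fin (2 * K + 1)) i, e j
    else
      s * ∏ j ∈ Finset.Ioc i (⟨K, by omega⟩ : Fin (2 * K + 1)), e j

/-- The candidate stationary distribution
`π(e) = 2^{-K} ∏_{k=0}^{K} ρ(∏_{ℓ=0}^{k} e(-ℓ)^{β_{k,ℓ}})`, where coordinate `-ℓ` is at
index `K - ℓ`. -/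
noncomputable def piDist (K : ℕ) (p : ℝ) (e : Fin (2 * K + 1) → ℤˣ) : ℝ :=
  (2 : ℝ) ^ (-(K : ℤ)) *
    ∏ k ∈ Finset.range (K + 1),
      rhoU p (∏ ℓ ∈ Finset.range (k + 1),
        e (⟨K - ℓ, by omega⟩ : Fin (2 * K + 1)) ^ (k.choose ℓ % 2))

namespace Stmt12Aux

open Finset

/-! ### Unit algebra helpers -/

lemma cancel1 (s P x : ℤˣ) : (s * P) * (s * (P * x)) = x := by
  rcases Int.units_eq_one_or s with rfl | rfl <;>
    rcases Int.units_eq_one_or P with rfl | rfl <;>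
      rcases Int.units_eq_one_or x with rfl | rfl <;> decide

lemma cancel2 (s P x : ℤˣ) : (s * (x * P)) * (s * P) = x := by
  rcases Int.units_eq_one_or s with rfl | rfl <;>
    rcases Int.units_eq_one_or P with rfl | rfl <;>
      rcases Int.units_eq_one_or x with rfl | rfl <;> decide

lemma cancel3 (a b : ℤˣ) : a * (a * b) = b := by
  rcases Int.units_eq_one_or a with rfl | rfl <;>
    rcases Int.units_eq_one_or b with rfl | rfl <;> decide

lemma cancel4 (a b : ℤˣ) : a * (b * a) = b := by
  rcases Int.units_eq_one_or a with rfl | rfl <;>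
    rcases Int.units_eq_one_or b with rfl | rfl <;> decide

/-! ### Extension of configurations to ℕ and basic product conversions -/

variable {K : ℕ}

/-- Extend `e : Fin (2K+1) → ℤˣ` to `ℕ` by `1`. -/
def ext (K : ℕ) (e : Fin (2 * K + 1) → ℤˣ) (j : ℕ) : ℤˣ :=
  if h : j < 2 * K + 1 then e ⟨j, h⟩ else 1

lemma ext_eq (e : Fin (2 * K + 1) → ℤˣ) {j : ℕ} (h : j < 2 * K + 1) :
    ext K e j = e ⟨j, h⟩ := dif_pos h

lemma ext_eq' (e : Fin (2 * K + 1) → ℤˣ) (i : Fin (2 * K + 1)) :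
    ext K e (i : ℕ) = e i := by
  rw [ext_eq e i.isLt]

lemma prod_Ioc_fin (e : Fin (2 * K + 1) → ℤˣ) (a b : Fin (2 * K + 1)) :
    ∏ j ∈ Ioc a b, e j = ∏ j ∈ Ioc (a : ℕ) (b : ℕ), ext K e j := by
  rw [← Fin.map_valEmbedding_Ioc, prod_map]
  exact prod_congr rfl fun x _ => (ext_eq' e x).symm

lemma telescope (h : ℕ → ℤˣ) : ∀ b a : ℕ, a ≤ b →
    ∏ j ∈ Ioc a b, (h (j - 1) * h j) = h a * h b := by
  intro b
  induction b with
  | zero =>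
    intro a ha
    interval_cases a
    rw [Finset.Ioc_self, prod_empty]
    exact (Int.units_mul_self _).symm
  | succ n ih =>
    intro a ha
    rcases Nat.eq_or_lt_of_le ha with rfl | hlt
    · rw [Finset.Ioc_self, prod_empty]
      exact (Int.units_mul_self _).symm
    · have ha' : a ≤ n := Nat.lt_succ_iff.mp hlt
      rw [Finset.prod_Ioc_succ_top (by omega), ih a ha']
      have hn : n + 1 - 1 = n := rfl
      rw [hn, mul_assoc, ← mul_assoc (h n), Int.units_mul_self, one_mul]

/-! ### The two forms of `stepE` -/

lemma stepE_ge (e : Fin (2 * K + 1) → ℤˣ) (s : ℤˣ) (i : Fin (2 * K + 1))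
    (h : K ≤ (i : ℕ)) :
    stepE K e s i = s * ∏ j ∈ Ioc K (i : ℕ), ext K e j := by
  unfold stepE
  rw [if_pos h, prod_Ioc_fin]

lemma stepE_le (e : Fin (2 * K + 1) → ℤˣ) (s : ℤˣ) (i : Fin (2 * K + 1))
    (h : (i : ℕ) ≤ K) :
    stepE K e s i = s * ∏ j ∈ Ioc (i : ℕ) K, ext K e j := by
  unfold stepE
  split
  · next h' =>
    have hiK : (i : ℕ) = K := le_antisymm h h'
    rw [prod_Ioc_fin]
    rw [show Fin.val (⟨K, by omega⟩ : Fin (2 * K + 1)) = K from rfl, hiK]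
  · rw [prod_Ioc_fin]

lemma stepE_center (e : Fin (2 * K + 1) → ℤˣ) (s : ℤˣ) :
    stepE K e s ⟨K, by omega⟩ = s := by
  rw [stepE_ge e s _ (le_refl K)]
  rw [show Fin.val (⟨K, by omega⟩ : Fin (2 * K + 1)) = K from rfl]
  rw [Finset.Ioc_self, prod_empty, mul_one]

/-! ### The inverse map -/

/-- The preimage of `f` under `stepE · ·` with free coordinate `ε` at index 0. -/
def invE (K : ℕ) (f : Fin (2 * K + 1) → ℤˣ) (ε : ℤˣ) : Fin (2 * K + 1) → ℤˣ :=
  fun j => if (j : ℕ) = 0 then ε else ext K f ((j : ℕ) - 1) * f j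

lemma invE_zero (f : Fin (2 * K + 1) → ℤˣ) (ε : ℤˣ) :
    invE K f ε ⟨0, by omega⟩ = ε := by
  unfold invE
  rw [if_pos rfl]

lemma ext_invE (f : Fin (2 * K + 1) → ℤˣ) (ε : ℤˣ) {j : ℕ} (h1 : 1 ≤ j)
    (h2 : j ≤ 2 * K) :
    ext K (invE K f ε) j = ext K f (j - 1) * ext K f j := by
  have hj : j < 2 * K + 1 := by omega
  rw [ext_eq _ hj, ext_eq f hj]
  unfold invE
  rw [if_neg (by simpa using Nat.one_le_iff_ne_zero.mp h1)]

lemma stepE_invE (f : Fin (2 * K + 1) → ℤˣ) (ε : ℤˣ) :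
    stepE K (invE K f ε) (f ⟨K, by omega⟩) = f := by
  funext i
  by_cases hi : K ≤ (i : ℕ)
  · rw [stepE_ge _ _ _ hi]
    rw [prod_congr rfl fun j hj => by
      have hj' := Finset.mem_Ioc.mp hj
      exact ext_invE f ε (by omega) (by omega : j ≤ 2 * K)]
    rw [telescope (ext K f) _ _ hi, ext_eq f (by omega : K < 2 * K + 1), ext_eq' f i]
    exact cancel3 _ _
  · push_neg at hi
    rw [stepE_le _ _ _ (le_of_lt hi)]
    rw [prod_congr rfl fun j hj => by
      have hj' := Finset.mem_Ioc.mp hj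
      exact ext_invE f ε (by omega) (by omega : j ≤ 2 * K)]
    rw [telescope (ext K f) _ _ (le_of_lt hi), ext_eq f (by omega : K < 2 * K + 1),
      ext_eq' f i]
    exact cancel4 _ _

lemma invE_stepE (e : Fin (2 * K + 1) → ℤˣ) (s : ℤˣ) :
    invE K (stepE K e s) (e ⟨0, by omega⟩) = e := by
  funext j
  unfold invE
  by_cases hj : (j : ℕ) = 0
  · rw [if_pos hj]
    congr 1
    exact Fin.ext hj.symm
  · rw [if_neg hj]
    have hj1 : 1 ≤ (j : ℕ) := Nat.one_le_iff_ne_zero.mpr hj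
    have hj2 : (j : ℕ) < 2 * K + 1 := j.isLt
    rw [ext_eq _ (by omega : (j : ℕ) - 1 < 2 * K + 1)]
    by_cases hK : K + 1 ≤ (j : ℕ)
    · -- right half
      rw [stepE_ge e s ⟨(j : ℕ) - 1, by omega⟩ (by simp; omega),
        stepE_ge e s j (by omega)]
      rw [show Fin.val (⟨(j : ℕ) - 1, by omega⟩ : Fin (2 * K + 1)) = (j : ℕ) - 1 from rfl]
      have hsplit : ∏ x ∈ Ioc K (j : ℕ), ext K e x
          = (∏ x ∈ Ioc K ((j : ℕ) - 1), ext K e x) * ext K e (j : ℕ) := by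
        have := Finset.prod_Ioc_succ_top (show K ≤ (j : ℕ) - 1 by omega) (ext K e)
        rwa [show (j : ℕ) - 1 + 1 = (j : ℕ) by omega] at this
      rw [hsplit, ext_eq' e j]
      exact cancel1 _ _ _
    · -- left half
      rw [stepE_le e s ⟨(j : ℕ) - 1, by omega⟩ (by simp; omega),
        stepE_le e s j (by omega)]
      rw [show Fin.val (⟨(j : ℕ) - 1, by omega⟩ : Fin (2 * K + 1)) = (j : ℕ) - 1 from rfl]
      have hsplit : ∏ x ∈ Ioc ((j : ℕ) - 1) K, ext K e x
          = ext K e (j : ℕ) * ∏ x ∈ Ioc (j : ℕ) K, ext K e x := by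
        rw [← Finset.prod_Ioc_consecutive (ext K e)
          (show (j : ℕ) - 1 ≤ (j : ℕ) by omega) (show (j : ℕ) ≤ K by omega)]
        congr 1
        have h0 : Ioc ((j : ℕ) - 1) ((j : ℕ) - 1 + 1) = {(j : ℕ) - 1 + 1} :=
          Nat.Ioc_succ_singleton _
        rw [show (j : ℕ) - 1 + 1 = (j : ℕ) from by omega] at h0
        rw [h0, prod_singleton]
      rw [hsplit, ext_eq' e j]
      exact cancel2 _ _ _

/-- The change-of-variables bijection `(e, s) ↦ (e^s, e(0))`. -/
def phi (K : ℕ) : ((Fin (2 * K + 1) → ℤˣ) × ℤˣ) ≃ ((Fin (2 * K + 1) → ℤˣ) × ℤˣ) where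
  toFun x := (stepE K x.1 x.2, x.1 ⟨0, by omega⟩)
  invFun x := (invE K x.1 x.2, x.1 ⟨K, by omega⟩)
  left_inv x := by
    ext : 1
    · exact invE_stepE x.1 x.2
    · exact stepE_center x.1 x.2
  right_inv x := by
    ext : 1
    · exact stepE_invE x.1 x.2
    · exact invE_zero x.1 x.2

/-! ### The stationarity computation -/

/-- Coordinate `-ℓ` of `f` as a function of `ℓ : ℕ`. -/
def gco (K : ℕ) (f : Fin (2 * K + 1) → ℤˣ) (ℓ : ℕ) : ℤˣ :=
  f ⟨K - ℓ, by omega⟩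

/-- `A_k(f) = ∏_{ℓ=0}^{k} f(-ℓ)^{C(k,ℓ)}`. -/
def Aprod (K : ℕ) (f : Fin (2 * K + 1) → ℤˣ) (k : ℕ) : ℤˣ :=
  ∏ ℓ ∈ range (k + 1), gco K f ℓ ^ k.choose ℓ

lemma piDist_eq (p : ℝ) (e : Fin (2 * K + 1) → ℤˣ) :
    piDist K p e = (2 : ℝ) ^ (-(K : ℤ)) * ∏ k ∈ range (K + 1), rhoU p (Aprod K e k) := by
  unfold piDist Aprod gco
  congr 1
  refine prod_congr rfl fun k _ => ?_
  congr 1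
  refine prod_congr rfl fun ℓ _ => ?_
  exact (Int.units_pow_eq_pow_mod_two _ _).symm

lemma pascal (g : ℕ → ℤˣ) (k : ℕ) :
    ∏ ℓ ∈ range (k + 2), g ℓ ^ (k + 1).choose ℓ
      = ∏ ℓ ∈ range (k + 1), (g (ℓ + 1) * g ℓ) ^ k.choose ℓ := by
  have h2 : (∏ ℓ ∈ range (k + 1), g (ℓ + 1) ^ k.choose (ℓ + 1)) * g 0
      = ∏ ℓ ∈ range (k + 1), g ℓ ^ k.choose ℓ := by
    rw [Finset.prod_range_succ, Finset.prod_range_succ' (fun ℓ => g ℓ ^ k.choose ℓ)]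
    simp [Nat.choose_succ_self]
  calc ∏ ℓ ∈ range (k + 2), g ℓ ^ (k + 1).choose ℓ
      = (∏ ℓ ∈ range (k + 1), g (ℓ + 1) ^ (k.choose ℓ + k.choose (ℓ + 1))) * g 0 := by
        rw [Finset.prod_range_succ' (fun ℓ => g ℓ ^ (k + 1).choose ℓ)]
        simp [Nat.choose_succ_succ]
    _ = (∏ ℓ ∈ range (k + 1), g (ℓ + 1) ^ k.choose ℓ) *
        ((∏ ℓ ∈ range (k + 1), g (ℓ + 1) ^ k.choose (ℓ + 1)) * g 0) := by
        simp only [pow_add, Finset.prod_mul_distrib]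
        rw [mul_assoc]
    _ = (∏ ℓ ∈ range (k + 1), g (ℓ + 1) ^ k.choose ℓ) *
        ∏ ℓ ∈ range (k + 1), g ℓ ^ k.choose ℓ := by rw [h2]
    _ = ∏ ℓ ∈ range (k + 1), (g (ℓ + 1) * g ℓ) ^ k.choose ℓ := by
        rw [← Finset.prod_mul_distrib]
        exact prod_congr rfl fun ℓ _ => (mul_pow _ _ _).symm

lemma gco_invE (f : Fin (2 * K + 1) → ℤˣ) (ε : ℤˣ) {ℓ : ℕ} (hℓ : ℓ < K) :
    gco K (invE K f ε) ℓ = gco K f (ℓ + 1) * gco K f ℓ := by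
  unfold gco invE
  rw [if_neg (by omega : ¬ (K - ℓ : ℕ) = 0)]
  rw [ext_eq f (by omega : K - ℓ - 1 < 2 * K + 1)]
  rfl

lemma gco_invE_K (f : Fin (2 * K + 1) → ℤˣ) (ε : ℤˣ) :
    gco K (invE K f ε) K = ε := by
  unfold gco invE
  rw [if_pos (by omega : (K - K : ℕ) = 0)]

lemma Aprod_invE_lt (f : Fin (2 * K + 1) → ℤˣ) (ε : ℤˣ) {k : ℕ} (hk : k < K) :
    Aprod K (invE K f ε) k = Aprod K f (k + 1) := by
  unfold Aprod
  rw [pascal (gco K f) k]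
  exact prod_congr rfl fun ℓ hℓ => by
    rw [gco_invE f ε (by have := mem_range.mp hℓ; omega)]

lemma Aprod_invE_K (f : Fin (2 * K + 1) → ℤˣ) (ε : ℤˣ) :
    Aprod K (invE K f ε) K
      = (∏ ℓ ∈ range K, (gco K f (ℓ + 1) * gco K f ℓ) ^ K.choose ℓ) * ε := by
  unfold Aprod
  rw [Finset.prod_range_succ]
  congr 1
  · exact prod_congr rfl fun ℓ hℓ => by
      rw [gco_invE f ε (mem_range.mp hℓ)]
  · rw [gco_invE_K, Nat.choose_self, pow_one]

lemma sum_rhoU_mul (p : ℝ) (c : ℤˣ) : ∑ ε : ℤˣ, rhoU p (c * ε) = 1 := by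
  have huniv : (Finset.univ : Finset ℤˣ) = {1, -1} := by decide
  rw [huniv, Finset.sum_insert (by decide), Finset.sum_singleton]
  rcases Int.units_eq_one_or c with rfl | rfl <;> simp [rhoU]

lemma Aprod_zero (f : Fin (2 * K + 1) → ℤˣ) :
    Aprod K f 0 = f ⟨K, by omega⟩ := by
  unfold Aprod gco
  rw [Finset.prod_range_one, Nat.choose_self, pow_one]
  rfl

lemma key (p : ℝ) (f : Fin (2 * K + 1) → ℤˣ) :
    ∑ ε : ℤˣ, piDist K p (invE K f ε) * rhoU p (f ⟨K, by omega⟩) = piDist K p f := by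
  set c : ℤˣ := ∏ ℓ ∈ range K, (gco K f (ℓ + 1) * gco K f ℓ) ^ K.choose ℓ with hc
  have h1 : ∀ ε : ℤˣ, piDist K p (invE K f ε)
      = (2 : ℝ) ^ (-(K : ℤ)) *
          ((∏ k ∈ range K, rhoU p (Aprod K f (k + 1))) * rhoU p (c * ε)) := by
    intro ε
    rw [piDist_eq, Finset.prod_range_succ]
    congr 2
    · exact prod_congr rfl fun k hk => by rw [Aprod_invE_lt f ε (mem_range.mp hk)]
    · rw [Aprod_invE_K, ← hc, mul_comm c ε, mul_comm ε c]
  calc ∑ ε : ℤˣ, piDist K p (invE K f ε) * rhoU p (f ⟨K, by omega⟩)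
      = (2 : ℝ) ^ (-(K : ℤ)) * (∏ k ∈ range K, rhoU p (Aprod K f (k + 1))) *
          rhoU p (f ⟨K, by omega⟩) * ∑ ε : ℤˣ, rhoU p (c * ε) := by
        rw [Finset.mul_sum]
        exact Fintype.sum_congr _ _ fun ε => by rw [h1]; ring
    _ = (2 : ℝ) ^ (-(K : ℤ)) * (∏ k ∈ range K, rhoU p (Aprod K f (k + 1))) *
          rhoU p (f ⟨K, by omega⟩) := by rw [sum_rhoU_mul]; ring
    _ = piDist K p f := by
        rw [piDist_eq, Finset.prod_range_succ' (fun k => rhoU p (Aprod K f k)),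
          Aprod_zero]
        ring

end Stmt12Aux

theorem stmt_12 (K : ℕ) (p : ℝ) (hp : p ∈ Set.Ioo (0 : ℝ) 1) :
    ∀ f : Fin (2 * K + 1) → ℤˣ,
      ∑ e : Fin (2 * K + 1) → ℤˣ, ∑ s : ℤˣ,
          piDist K p e * rhoU p s * (if stepE K e s = f then 1 else 0)
        = piDist K p f := by
  intro f
  classical
  open Stmt12Aux in
  set F : ((Fin (2 * K + 1) → ℤˣ) × ℤˣ) → ℝ :=
    fun x => piDist K p x.1 * rhoU p x.2 * (if stepE K x.1 x.2 = f then 1 else 0) with hF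
  calc ∑ e : Fin (2 * K + 1) → ℤˣ, ∑ s : ℤˣ,
          piDist K p e * rhoU p s * (if stepE K e s = f then 1 else 0)
      = ∑ x : ((Fin (2 * K + 1) → ℤˣ) × ℤˣ), F x := (Fintype.sum_prod_type F).symm
    _ = ∑ x : ((Fin (2 * K + 1) → ℤˣ) × ℤˣ), F ((phi K).symm x) :=
        (Equiv.sum_comp (phi K).symm F).symm
    _ = ∑ x : ((Fin (2 * K + 1) → ℤˣ) × ℤˣ),
          piDist K p (invE K x.1 x.2) * rhoU p (x.1 ⟨K, by omega⟩) *
            (if x.1 = f then 1 else 0) := by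
        refine Fintype.sum_congr _ _ fun x => ?_
        show piDist K p (invE K x.1 x.2) * rhoU p (x.1 ⟨K, by omega⟩) *
            (if stepE K (invE K x.1 x.2) (x.1 ⟨K, by omega⟩) = f then 1 else 0) = _
        rw [stepE_invE]
    _ = ∑ g : Fin (2 * K + 1) → ℤˣ, ∑ ε : ℤˣ,
          piDist K p (invE K g ε) * rhoU p (g ⟨K, by omega⟩) *
            (if g = f then 1 else 0) :=
        Fintype.sum_prod_type _
    _ = ∑ ε : ℤˣ, piDist K p (invE K f ε) * rhoU p (f ⟨K, by omega⟩) := by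
        rw [Finset.sum_comm]
        refine Fintype.sum_congr _ _ fun ε => ?_
        simp only [mul_ite, mul_one, mul_zero]
        rw [Finset.sum_ite_eq' Finset.univ f
          (fun g => piDist K p (invE K g ε) * rhoU p (g ⟨K, by omega⟩))]
        simp
    _ = piDist K p f := key p f
end
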